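/- If det(Z_1) ≠ 0, then the two-point boundary value problem (MFG TPBV) has exactly one solution (X̄, s) on [0, T]. -/

import Mathlib

open Matrix

/-- `M = B R⁻¹ Bᵀ`. -/
noncomputable def Mmat (n n1 : ℕ) (B : Matrix (Fin n) (Fin n1) ℝ)
    (R : Matrix (Fin n1) (Fin n1) ℝ) : Matrix (Fin n) (Fin n) ℝ :=
  B * R⁻¹ * Bᵀ

/-- The `2n × 2n` coefficient matrix `𝔸(t)` of the TPBV problem, where `L1 = Λ₁(t)`. -/
noncomputable def bbA (n n1 : ℕ) (A G Q Γ : Matrix (Fin n) (Fin n) ℝ)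
    (B : Matrix (Fin n) (Fin n1) ℝ) (R : Matrix (Fin n1) (Fin n1) ℝ)
    (L1 : Matrix (Fin n) (Fin n) ℝ) :
    Matrix (Fin n ⊕ Fin n) (Fin n ⊕ Fin n) ℝ :=
  Matrix.fromBlocks (A - Mmat n n1 B R * L1 + G) (-(Mmat n n1 B R))
    (Q * Γ - L1 * G) (-Aᵀ + L1 * Mmat n n1 B R)

/-- `Λ₁` solves the symmetric Riccati TVP on `[0,T]`. -/
def IsLam1Sol (n n1 : ℕ) (A Q Qf : Matrix (Fin n) (Fin n) ℝ)
    (B : Matrix (Fin n) (Fin n1) ℝ) (R : Matrix (Fin n1) (Fin n1) ℝ) (T : ℝ)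
    (Λ1 : ℝ → Matrix (Fin n) (Fin n) ℝ) : Prop :=
  (∀ t ∈ Set.Icc (0:ℝ) T, ∀ r c,
    HasDerivWithinAt (fun s => Λ1 s r c)
      ((Λ1 t * Mmat n n1 B R * Λ1 t - (Λ1 t * A + Aᵀ * Λ1 t) - Q) r c)
      (Set.Icc (0:ℝ) T) t)
  ∧ Λ1 T = Qf

/-- `Φ(t,τ)` is the fundamental solution matrix of `∂Φ/∂t = 𝔸(t) Φ`, `Φ(τ,τ) = I`,
for `t, τ ∈ [0,T]`. -/
def IsFundSol (n n1 : ℕ) (A G Q Γ : Matrix (Fin n) (Fin n) ℝ)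
    (B : Matrix (Fin n) (Fin n1) ℝ) (R : Matrix (Fin n1) (Fin n1) ℝ) (T : ℝ)
    (Λ1 : ℝ → Matrix (Fin n) (Fin n) ℝ)
    (Φ : ℝ → ℝ → Matrix (Fin n ⊕ Fin n) (Fin n ⊕ Fin n) ℝ) : Prop :=
  ∀ τ ∈ Set.Icc (0:ℝ) T, Φ τ τ = 1 ∧
    ∀ t ∈ Set.Icc (0:ℝ) T, ∀ p q,
      HasDerivWithinAt (fun s => Φ s τ p q)
        ((bbA n n1 A G Q Γ B R (Λ1 t) * Φ t τ) p q) (Set.Icc (0:ℝ) T) t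

/-- `Z₁ = Φ₂₂(T,0) + Q_f Γ_f Φ₁₂(T,0)`. -/
noncomputable def Z1mat (n : ℕ) (Qf Γf : Matrix (Fin n) (Fin n) ℝ) (T : ℝ)
    (Φ : ℝ → ℝ → Matrix (Fin n ⊕ Fin n) (Fin n ⊕ Fin n) ℝ) :
    Matrix (Fin n) (Fin n) ℝ :=
  (Φ T 0).toBlocks₂₂ + Qf * Γf * (Φ T 0).toBlocks₁₂

/-- `Z₂ = [Φ₂₁(T,0) + Q_f Γ_f Φ₁₁(T,0)] x₀ + Q_f η_f
      + ∫₀ᵀ [Φ₂₂(T,τ) + Q_f Γ_f Φ₁₂(T,τ)] Q η dτ`. -/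
noncomputable def Z2vec (n : ℕ) (Q Qf Γf : Matrix (Fin n) (Fin n) ℝ)
    (η ηf x0 : Fin n → ℝ) (T : ℝ)
    (Φ : ℝ → ℝ → Matrix (Fin n ⊕ Fin n) (Fin n ⊕ Fin n) ℝ)
    (j : Fin n) : ℝ :=
  (((Φ T 0).toBlocks₂₁ + Qf * Γf * (Φ T 0).toBlocks₁₁) *ᵥ x0) j
    + (Qf *ᵥ ηf) j
    + ∫ τ in (0:ℝ)..T,
        ((((Φ T τ).toBlocks₂₂ + Qf * Γf * (Φ T τ).toBlocks₁₂) *ᵥ (Q *ᵥ η)) j)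

/-- `(X̄, s)` solves the MFG TPBV problem on `[0,T]`. -/
def IsTPBVSol (n n1 : ℕ) (A G Q Qf Γ Γf : Matrix (Fin n) (Fin n) ℝ)
    (B : Matrix (Fin n) (Fin n1) ℝ) (R : Matrix (Fin n1) (Fin n1) ℝ)
    (η ηf x0 : Fin n → ℝ) (T : ℝ)
    (Λ1 : ℝ → Matrix (Fin n) (Fin n) ℝ) (X s : ℝ → Fin n → ℝ) : Prop :=
  (∀ t ∈ Set.Icc (0:ℝ) T, ∀ j,
    HasDerivWithinAt (fun u => X u j)
      (((A - Mmat n n1 B R * Λ1 t + G) *ᵥ X t - Mmat n n1 B R *ᵥ s t) j)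
      (Set.Icc (0:ℝ) T) t)
  ∧ (∀ t ∈ Set.Icc (0:ℝ) T, ∀ j,
    HasDerivWithinAt (fun u => s u j)
      ((-((Aᵀ - Λ1 t * Mmat n n1 B R) *ᵥ s t) - (Λ1 t * G) *ᵥ X t
        + Q *ᵥ (Γ *ᵥ X t + η)) j)
      (Set.Icc (0:ℝ) T) t)
  ∧ X 0 = x0
  ∧ s T = -(Qf *ᵥ (Γf *ᵥ X T + ηf))


section TPBVHelpers

open Set

set_option linter.unusedSectionVars false

namespace TPBVAux

variable {m : Type*} [Fintype m] [DecidableEq m]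

/-- Product rule for an entry of `M u *ᵥ c u`. -/
lemma hasDerivWithinAt_mulVec_entry {M : ℝ → Matrix m m ℝ} {c : ℝ → m → ℝ}
    {M' : Matrix m m ℝ} {c' : m → ℝ} {s : Set ℝ} {t : ℝ}
    (hM : ∀ p q, HasDerivWithinAt (fun u => M u p q) (M' p q) s t)
    (hc : ∀ q, HasDerivWithinAt (fun u => c u q) (c' q) s t) (p : m) :
    HasDerivWithinAt (fun u => (M u *ᵥ c u) p) ((M' *ᵥ c t + M t *ᵥ c') p) s t := by
  simp only [Matrix.mulVec, dotProduct, Pi.add_apply]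
  rw [← Finset.sum_add_distrib]
  exact HasDerivWithinAt.fun_sum fun q _ => (hM p q).mul (hc q)

/-- Two-sided uniqueness for the linear inhomogeneous ODE `x' = M t *ᵥ x + f0` on `[0,T]`. -/
lemma linear_ODE_unique {T : ℝ} (hT : 0 < T)
    (M : ℝ → Matrix m m ℝ)
    (hMc : ∀ p q, ContinuousOn (fun t => M t p q) (Icc 0 T))
    (f0 : m → ℝ) (x y : ℝ → m → ℝ)
    (hx : ∀ t ∈ Icc (0:ℝ) T, HasDerivWithinAt x (M t *ᵥ x t + f0) (Icc 0 T) t)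
    (hy : ∀ t ∈ Icc (0:ℝ) T, HasDerivWithinAt y (M t *ᵥ y t + f0) (Icc 0 T) t)
    {t₀ : ℝ} (ht₀ : t₀ ∈ Icc (0:ℝ) T) (hxy : x t₀ = y t₀) :
    ∀ t ∈ Icc (0:ℝ) T, x t = y t := by
  classical
  have hbnd : ∃ C : ℝ, 0 ≤ C ∧ ∀ t ∈ Icc (0:ℝ) T, ∀ p q, |M t p q| ≤ C := by
    choose C hC using fun pq : m × m =>
      isCompact_Icc.exists_bound_of_continuousOn (hMc pq.1 pq.2)
    refine ⟨∑ pq : m × m, |C pq|, Finset.sum_nonneg fun _ _ => abs_nonneg _,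
      fun t ht p q => ?_⟩
    calc |M t p q| ≤ C (p, q) := by simpa using hC (p, q) t ht
      _ ≤ |C (p, q)| := le_abs_self _
      _ ≤ ∑ pq : m × m, |C pq| :=
        Finset.single_le_sum (f := fun pq : m × m => |C pq|)
          (fun _ _ => abs_nonneg _) (Finset.mem_univ (p, q))
  obtain ⟨C, hC0, hC⟩ := hbnd
  set proj : ℝ → ℝ := fun t => max 0 (min t T) with hprojdef
  have hprojmem : ∀ t, proj t ∈ Icc (0:ℝ) T :=
    fun t => ⟨le_max_left _ _, max_le hT.le (min_le_right _ _)⟩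
  have hprojeq : ∀ t ∈ Icc (0:ℝ) T, proj t = t := by
    intro t ht
    simp [hprojdef, min_eq_left ht.2, max_eq_right ht.1]
  set K : NNReal := Real.toNNReal ((Fintype.card m : ℝ) * C) with hKdef
  set v : ℝ → (m → ℝ) → (m → ℝ) := fun t z => M (proj t) *ᵥ z + f0 with hvdef
  have hKC : ((Fintype.card m : ℝ) * C) ≤ (K : ℝ) :=
    Real.le_coe_toNNReal _
  have hlip : ∀ t, LipschitzWith K (v t) := by
    intro t
    apply LipschitzWith.of_dist_le_mul
    intro a b
    rw [dist_eq_norm, dist_eq_norm]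
    have hsub : v t a - v t b = M (proj t) *ᵥ (a - b) := by
      simp [hvdef, Matrix.mulVec_sub]
    rw [hsub]
    refine le_trans ((pi_norm_le_iff_of_nonneg (by positivity)).2 (fun p => ?_))
      (mul_le_mul_of_nonneg_right hKC (norm_nonneg _))
    calc ‖(M (proj t) *ᵥ (a - b)) p‖
          = |∑ q, M (proj t) p q * (a - b) q| := rfl
        _ ≤ ∑ q, |M (proj t) p q * (a - b) q| := Finset.abs_sum_le_sum_abs _ _
        _ ≤ ∑ _q : m, C * ‖a - b‖ := by
            refine Finset.sum_le_sum fun q _ => ?_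
            rw [abs_mul]
            exact mul_le_mul (hC _ (hprojmem t) p q) (norm_le_pi_norm (a - b) q)
              (abs_nonneg _) hC0
        _ = (Fintype.card m : ℝ) * C * ‖a - b‖ := by
            rw [Finset.sum_const, Finset.card_univ, nsmul_eq_mul, mul_assoc]
  have hvx : ∀ t ∈ Icc (0:ℝ) T, v t (x t) = M t *ᵥ x t + f0 := by
    intro t ht; simp [hvdef, hprojeq t ht]
  have hvy : ∀ t ∈ Icc (0:ℝ) T, v t (y t) = M t *ᵥ y t + f0 := by
    intro t ht; simp [hvdef, hprojeq t ht]
  have hxc : ContinuousOn x (Icc 0 T) := fun u hu => (hx u hu).continuousWithinAt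
  have hyc : ContinuousOn y (Icc 0 T) := fun u hu => (hy u hu).continuousWithinAt
  intro t ht
  rcases le_total t t₀ with hle | hle
  · have h := ODE_solution_unique_of_mem_Icc_left (v := v) (s := fun _ => univ)
      (fun u _ => (hlip u).lipschitzOnWith (s := univ))
      (hxc.mono (Icc_subset_Icc le_rfl ht₀.2))
      (fun u hu => by
        have humem : u ∈ Icc (0:ℝ) T := ⟨hu.1.le, le_trans hu.2 ht₀.2⟩
        have := (hx u humem).mono_of_mem_nhdsWithin
          (Icc_mem_nhdsLE_of_mem ⟨hu.1, humem.2⟩)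
        rwa [hvx u humem])
      (fun _ _ => trivial)
      (hyc.mono (Icc_subset_Icc le_rfl ht₀.2))
      (fun u hu => by
        have humem : u ∈ Icc (0:ℝ) T := ⟨hu.1.le, le_trans hu.2 ht₀.2⟩
        have := (hy u humem).mono_of_mem_nhdsWithin
          (Icc_mem_nhdsLE_of_mem ⟨hu.1, humem.2⟩)
        rwa [hvy u humem])
      (fun _ _ => trivial) hxy
    exact h ⟨ht.1, hle⟩
  · have h := ODE_solution_unique_of_mem_Icc_right (v := v) (s := fun _ => univ)
      (fun u _ => (hlip u).lipschitzOnWith (s := univ))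
      (hxc.mono (Icc_subset_Icc ht₀.1 le_rfl))
      (fun u hu => by
        have humem : u ∈ Icc (0:ℝ) T := ⟨le_trans ht₀.1 hu.1, hu.2.le⟩
        have := (hx u humem).mono_of_mem_nhdsWithin
          (Icc_mem_nhdsGE_of_mem ⟨humem.1, hu.2⟩)
        rwa [hvx u humem])
      (fun _ _ => trivial)
      (hyc.mono (Icc_subset_Icc ht₀.1 le_rfl))
      (fun u hu => by
        have humem : u ∈ Icc (0:ℝ) T := ⟨le_trans ht₀.1 hu.1, hu.2.le⟩
        have := (hy u humem).mono_of_mem_nhdsWithin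
          (Icc_mem_nhdsGE_of_mem ⟨humem.1, hu.2⟩)
        rwa [hvy u humem])
      (fun _ _ => trivial) hxy
    exact h ⟨hle, ht.2⟩

/-- FTC: derivative of `u ↦ ∫_0^u g` within `[0,T]`. -/
lemma ftc_helper {T : ℝ} {g : ℝ → ℝ}
    (hg : ContinuousOn g (Icc 0 T)) {t : ℝ} (ht : t ∈ Icc (0:ℝ) T) :
    HasDerivWithinAt (fun u => ∫ τ in (0:ℝ)..u, g τ) (g t) (Icc 0 T) t := by
  haveI : Fact (t ∈ Icc (0:ℝ) T) := ⟨ht⟩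
  refine intervalIntegral.integral_hasDerivWithinAt_right ?_ ?_ (hg t ht)
  · refine (hg.mono ?_).intervalIntegrable
    rw [uIcc_of_le ht.1]
    exact Icc_subset_Icc le_rfl ht.2
  · exact hg.stronglyMeasurableAtFilter_nhdsWithin measurableSet_Icc t

/-- The variation-of-constants candidate solves the inhomogeneous linear ODE. -/
lemma solution_hasDeriv {T : ℝ}
    (Ψ AM : ℝ → Matrix m m ℝ)
    (hΨ : ∀ t ∈ Icc (0:ℝ) T, ∀ p q,
      HasDerivWithinAt (fun u => Ψ u p q) ((AM t * Ψ t) p q) (Icc 0 T) t)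
    (Cf g : ℝ → m → ℝ)
    (hC : ∀ t ∈ Icc (0:ℝ) T, ∀ p,
      HasDerivWithinAt (fun u => Cf u p) (g t p) (Icc 0 T) t)
    (f0 : m → ℝ) (hg : ∀ t ∈ Icc (0:ℝ) T, Ψ t *ᵥ g t = f0)
    (z0 : m → ℝ) :
    ∀ t ∈ Icc (0:ℝ) T, HasDerivWithinAt (fun u => Ψ u *ᵥ (z0 + Cf u))
      (AM t *ᵥ (Ψ t *ᵥ (z0 + Cf t)) + f0) (Icc 0 T) t := by
  intro t ht
  refine hasDerivWithinAt_pi.2 fun p => ?_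
  have key := hasDerivWithinAt_mulVec_entry (M := Ψ) (c := fun u => z0 + Cf u)
    (M' := AM t * Ψ t) (c' := g t) (hΨ t ht)
    (fun q => ((hC t ht q).const_add (z0 q))) p
  have he : (AM t *ᵥ (Ψ t *ᵥ (z0 + Cf t)) + f0) p
      = ((AM t * Ψ t) *ᵥ (z0 + Cf t) + Ψ t *ᵥ g t) p := by
    rw [Matrix.mulVec_mulVec, hg t ht]
  rw [he]
  exact key

/-- Continuity of the pointwise matrix inverse when the determinant does not vanish. -/
lemma continuousOn_matrix_inv {T : ℝ} {Ψ : ℝ → Matrix m m ℝ}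
    (hc : ContinuousOn Ψ (Icc 0 T))
    (hdet : ∀ t ∈ Icc (0:ℝ) T, (Ψ t).det ≠ 0) :
    ContinuousOn (fun t => (Ψ t)⁻¹) (Icc 0 T) := by
  have hrw : ∀ t, (Ψ t)⁻¹ = ((Ψ t).det)⁻¹ • (Ψ t).adjugate := fun t => by
    rw [Matrix.inv_def, Ring.inverse_eq_inv']
  simp only [hrw]
  exact ((continuous_id.matrix_det.comp_continuousOn hc).inv₀ hdet).smul
    (continuous_id.matrix_adjugate.comp_continuousOn hc)

end TPBVAux

namespace TPBVAux3

/-- Block decomposition of the TPBV vector field. -/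
lemma block_eq (n n1 : ℕ) (A G Q Γ : Matrix (Fin n) (Fin n) ℝ)
    (B : Matrix (Fin n) (Fin n1) ℝ) (R : Matrix (Fin n1) (Fin n1) ℝ)
    (L : Matrix (Fin n) (Fin n) ℝ) (η : Fin n → ℝ) (yv : Fin n ⊕ Fin n → ℝ) :
    bbA n n1 A G Q Γ B R L *ᵥ yv + Sum.elim (0 : Fin n → ℝ) (Q *ᵥ η) =
    Sum.elim
      ((A - Mmat n n1 B R * L + G) *ᵥ (yv ∘ Sum.inl) - Mmat n n1 B R *ᵥ (yv ∘ Sum.inr))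
      (-((Aᵀ - L * Mmat n n1 B R) *ᵥ (yv ∘ Sum.inr)) - (L * G) *ᵥ (yv ∘ Sum.inl)
        + Q *ᵥ (Γ *ᵥ (yv ∘ Sum.inl) + η)) := by
  have h1 : (A - Mmat n n1 B R * L + G) *ᵥ (yv ∘ Sum.inl)
        + (-(Mmat n n1 B R)) *ᵥ (yv ∘ Sum.inr) + 0
      = (A - Mmat n n1 B R * L + G) *ᵥ (yv ∘ Sum.inl)
        - Mmat n n1 B R *ᵥ (yv ∘ Sum.inr) := by
    rw [Matrix.neg_mulVec]; abel
  have h2 : (Q * Γ - L * G) *ᵥ (yv ∘ Sum.inl)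
        + (-Aᵀ + L * Mmat n n1 B R) *ᵥ (yv ∘ Sum.inr) + Q *ᵥ η
      = -((Aᵀ - L * Mmat n n1 B R) *ᵥ (yv ∘ Sum.inr)) - (L * G) *ᵥ (yv ∘ Sum.inl)
        + Q *ᵥ (Γ *ᵥ (yv ∘ Sum.inl) + η) := by
    simp only [Matrix.sub_mulVec, Matrix.add_mulVec, Matrix.neg_mulVec,
      Matrix.mulVec_add, Matrix.mulVec_mulVec]
    abel
  rw [bbA, Matrix.fromBlocks_mulVec]
  funext p
  cases p with
  | inl i => simpa using congrFun h1 i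
  | inr i => simpa using congrFun h2 i

/-- Block decomposition of the terminal-condition expression. -/
lemma terminal_eq {n : ℕ} (P : Matrix (Fin n ⊕ Fin n) (Fin n ⊕ Fin n) ℝ)
    (Qf Γf : Matrix (Fin n) (Fin n) ℝ) (ηf : Fin n → ℝ) (w : Fin n ⊕ Fin n → ℝ) :
    (fun i => (P *ᵥ w) (Sum.inr i)) + Qf *ᵥ (Γf *ᵥ (fun i => (P *ᵥ w) (Sum.inl i)) + ηf)
      = (P.toBlocks₂₁ + Qf * Γf * P.toBlocks₁₁) *ᵥ (w ∘ Sum.inl)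
        + ((P.toBlocks₂₂ + Qf * Γf * P.toBlocks₁₂) *ᵥ (w ∘ Sum.inr) + Qf *ᵥ ηf) := by
  conv_lhs => rw [← Matrix.fromBlocks_toBlocks P]
  rw [Matrix.fromBlocks_mulVec]
  simp only [Sum.elim_inl, Sum.elim_inr]
  simp only [Matrix.add_mulVec, Matrix.mulVec_add, Matrix.mulVec_mulVec, mul_assoc]
  funext i
  simp only [Pi.add_apply]
  ring

end TPBVAux3

end TPBVHelpers

/-- The forcing-term integral `∫_0^t Φ(τ,0)⁻¹ (0, Qη) dτ`, componentwise. -/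
noncomputable def CfAux (n : ℕ) (Q : Matrix (Fin n) (Fin n) ℝ) (η : Fin n → ℝ)
    (Φ : ℝ → ℝ → Matrix (Fin n ⊕ Fin n) (Fin n ⊕ Fin n) ℝ) (t : ℝ)
    (p : Fin n ⊕ Fin n) : ℝ :=
  ∫ τ in (0:ℝ)..t, ((Φ τ 0)⁻¹ *ᵥ Sum.elim (0 : Fin n → ℝ) (Q *ᵥ η)) p


/-- If `det Z₁ ≠ 0`, the MFG TPBV problem has exactly one solution
`(X̄, s)` on `[0, T]` (uniqueness understood on `[0,T]`). -/
theorem tpbv_unique_solution_of_det_Z1_ne_zero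
    (n n1 : ℕ) (hn : 0 < n) (hn1 : 0 < n1) (T : ℝ) (hT : 0 < T)
    (A G Q Qf Γ Γf : Matrix (Fin n) (Fin n) ℝ)
    (B : Matrix (Fin n) (Fin n1) ℝ) (R : Matrix (Fin n1) (Fin n1) ℝ)
    (η ηf x0 : Fin n → ℝ)
    (hQ : Q.PosSemidef) (hQf : Qf.PosSemidef) (hR : R.PosDef)
    (Λ1 : ℝ → Matrix (Fin n) (Fin n) ℝ)
    (hΛ1 : IsLam1Sol n n1 A Q Qf B R T Λ1)
    (Φ : ℝ → ℝ → Matrix (Fin n ⊕ Fin n) (Fin n ⊕ Fin n) ℝ)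
    (hΦ : IsFundSol n n1 A G Q Γ B R T Λ1 Φ)
    (hdet : (Z1mat n Qf Γf T Φ).det ≠ 0) :
    ∃ X s : ℝ → Fin n → ℝ,
      IsTPBVSol n n1 A G Q Qf Γ Γf B R η ηf x0 T Λ1 X s ∧
      ∀ X' s' : ℝ → Fin n → ℝ,
        IsTPBVSol n n1 A G Q Qf Γ Γf B R η ηf x0 T Λ1 X' s' →
        ∀ t ∈ Set.Icc (0:ℝ) T, X' t = X t ∧ s' t = s t := by
  classical
  obtain ⟨hΛd, -⟩ := hΛ1
  obtain ⟨hΨ0, hΨd⟩ := hΦ 0 ⟨le_rfl, hT.le⟩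
  have hΛcm : ContinuousOn (fun t => Λ1 t) (Set.Icc 0 T) := by
    refine continuousOn_pi.2 fun i => continuousOn_pi.2 fun j => ?_
    exact fun t ht => (hΛd t ht i j).continuousWithinAt
  have hbbAc : ContinuousOn (fun t => bbA n n1 A G Q Γ B R (Λ1 t)) (Set.Icc 0 T) := by
    have hc : Continuous (fun L : Matrix (Fin n) (Fin n) ℝ => bbA n n1 A G Q Γ B R L) := by
      unfold bbA
      exact Continuous.matrix_fromBlocks
        ((continuous_const.sub (continuous_const.matrix_mul continuous_id)).add
          continuous_const)
        continuous_const
        (continuous_const.sub (continuous_id.matrix_mul continuous_const))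
        (continuous_const.add (continuous_id.matrix_mul continuous_const))
    exact hc.comp_continuousOn hΛcm
  have hAMentry : ∀ p q,
      ContinuousOn (fun t => bbA n n1 A G Q Γ B R (Λ1 t) p q) (Set.Icc 0 T) :=
    fun p q => (continuous_id.matrix_elem p q).comp_continuousOn hbbAc
  have hΨcm : ContinuousOn (fun t => Φ t 0) (Set.Icc 0 T) := by
    refine continuousOn_pi.2 fun p => continuousOn_pi.2 fun q => ?_
    exact fun t ht => (hΨd t ht p q).continuousWithinAt
  have hΨdet : ∀ t ∈ Set.Icc (0:ℝ) T, (Φ t 0).det ≠ 0 := by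
    intro t₀ ht₀ h0
    obtain ⟨v, hv0, hv⟩ := Matrix.exists_mulVec_eq_zero_iff.2 h0
    have hx : ∀ t ∈ Set.Icc (0:ℝ) T, HasDerivWithinAt (fun u => Φ u 0 *ᵥ v)
        (bbA n n1 A G Q Γ B R (Λ1 t) *ᵥ (Φ t 0 *ᵥ v) + 0) (Set.Icc 0 T) t := by
      intro t ht
      refine hasDerivWithinAt_pi.2 fun p => ?_
      have key := TPBVAux.hasDerivWithinAt_mulVec_entry (M := fun u => Φ u 0)
        (c := fun _ => v) (M' := bbA n n1 A G Q Γ B R (Λ1 t) * Φ t 0) (c' := 0)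
        (hΨd t ht) (fun q => hasDerivWithinAt_const _ _ _) p
      simpa [Matrix.mulVec_zero] using key
    have hy : ∀ t ∈ Set.Icc (0:ℝ) T,
        HasDerivWithinAt (fun _ : ℝ => (0 : Fin n ⊕ Fin n → ℝ))
        (bbA n n1 A G Q Γ B R (Λ1 t) *ᵥ (0 : Fin n ⊕ Fin n → ℝ) + 0) (Set.Icc 0 T) t := by
      intro t ht
      simpa [Matrix.mulVec_zero] using
        (hasDerivWithinAt_const t (Set.Icc (0:ℝ) T) (0 : Fin n ⊕ Fin n → ℝ))
    have huniq := TPBVAux.linear_ODE_unique hT _ hAMentry 0 _ _ hx hy ht₀ hv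
    have h00 := huniq 0 ⟨le_rfl, hT.le⟩
    apply hv0
    have h1 : (1 : Matrix (Fin n ⊕ Fin n) (Fin n ⊕ Fin n) ℝ) *ᵥ v = 0 := by
      rw [← hΨ0]; exact h00
    simpa using h1
  have hinvc : ContinuousOn (fun t => (Φ t 0)⁻¹) (Set.Icc 0 T) :=
    TPBVAux.continuousOn_matrix_inv hΨcm hΨdet
  have hgc : ∀ p : Fin n ⊕ Fin n, ContinuousOn
      (fun τ => ((Φ τ 0)⁻¹ *ᵥ Sum.elim (0 : Fin n → ℝ) (Q *ᵥ η)) p) (Set.Icc 0 T) := by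
    intro p
    have hm : Continuous (fun M : Matrix (Fin n ⊕ Fin n) (Fin n ⊕ Fin n) ℝ =>
        (M *ᵥ Sum.elim (0 : Fin n → ℝ) (Q *ᵥ η)) p) :=
      (continuous_apply p).comp (continuous_id.matrix_mulVec continuous_const)
    exact hm.comp_continuousOn hinvc
  have hΨg : ∀ t ∈ Set.Icc (0:ℝ) T,
      Φ t 0 *ᵥ ((Φ t 0)⁻¹ *ᵥ Sum.elim (0 : Fin n → ℝ) (Q *ᵥ η)) = Sum.elim (0 : Fin n → ℝ) (Q *ᵥ η) := by
    intro t ht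
    rw [Matrix.mulVec_mulVec, Matrix.mul_nonsing_inv _ (isUnit_iff_ne_zero.2 (hΨdet t ht)),
      Matrix.one_mulVec]
  have hCd : ∀ t ∈ Set.Icc (0:ℝ) T, ∀ p,
      HasDerivWithinAt (fun u => CfAux n Q η Φ u p)
        (((Φ t 0)⁻¹ *ᵥ Sum.elim (0 : Fin n → ℝ) (Q *ᵥ η)) p) (Set.Icc 0 T) t :=
    fun t ht p => TPBVAux.ftc_helper (hgc p) ht
  have hsol := TPBVAux.solution_hasDeriv (T := T) (fun t => Φ t 0)
    (fun t => bbA n n1 A G Q Γ B R (Λ1 t)) hΨd (CfAux n Q η Φ)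
    (fun t => (Φ t 0)⁻¹ *ᵥ Sum.elim (0 : Fin n → ℝ) (Q *ᵥ η)) hCd
    (Sum.elim (0 : Fin n → ℝ) (Q *ᵥ η)) hΨg
  have hCf0 : ∀ p, CfAux n Q η Φ 0 p = 0 := fun p => intervalIntegral.integral_same
  have hP2 : ∀ z0' : Fin n ⊕ Fin n → ℝ, Φ 0 0 *ᵥ (z0' + CfAux n Q η Φ 0) = z0' := by
    intro z0'
    have h1 : z0' + CfAux n Q η Φ 0 = z0' := by
      funext p; simp [hCf0]
    rw [h1, hΨ0, Matrix.one_mulVec]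
  have hP1 : ∀ z0' : Fin n ⊕ Fin n → ℝ, ∀ t ∈ Set.Icc (0:ℝ) T, ∀ p : Fin n ⊕ Fin n,
      HasDerivWithinAt (fun u => (Φ u 0 *ᵥ (z0' + CfAux n Q η Φ u)) p)
        (Sum.elim
          ((A - Mmat n n1 B R * Λ1 t + G) *ᵥ ((Φ t 0 *ᵥ (z0' + CfAux n Q η Φ t)) ∘ Sum.inl)
            - Mmat n n1 B R *ᵥ ((Φ t 0 *ᵥ (z0' + CfAux n Q η Φ t)) ∘ Sum.inr))
          (-((Aᵀ - Λ1 t * Mmat n n1 B R) *ᵥ ((Φ t 0 *ᵥ (z0' + CfAux n Q η Φ t)) ∘ Sum.inr))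
            - (Λ1 t * G) *ᵥ ((Φ t 0 *ᵥ (z0' + CfAux n Q η Φ t)) ∘ Sum.inl)
            + Q *ᵥ (Γ *ᵥ ((Φ t 0 *ᵥ (z0' + CfAux n Q η Φ t)) ∘ Sum.inl) + η)) p)
        (Set.Icc 0 T) t := by
    intro z0' t ht p
    have hd := hasDerivWithinAt_pi.1 (hsol z0' t ht) p
    rwa [TPBVAux3.block_eq n n1 A G Q Γ B R (Λ1 t) η] at hd
  have hterm : ∀ w : Fin n ⊕ Fin n → ℝ,
      (fun i => (Φ T 0 *ᵥ w) (Sum.inr i))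
          + Qf *ᵥ (Γf *ᵥ (fun i => (Φ T 0 *ᵥ w) (Sum.inl i)) + ηf)
        = ((Φ T 0).toBlocks₂₁ + Qf * Γf * (Φ T 0).toBlocks₁₁) *ᵥ (w ∘ Sum.inl)
          + (Z1mat n Qf Γf T Φ *ᵥ (w ∘ Sum.inr) + Qf *ᵥ ηf) :=
    fun w => TPBVAux3.terminal_eq (Φ T 0) Qf Γf ηf w
  have hZ1inj : ∀ a b : Fin n → ℝ,
      Z1mat n Qf Γf T Φ *ᵥ a = Z1mat n Qf Γf T Φ *ᵥ b → a = b := by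
    intro a b hab
    have h := congrArg (fun v => (Z1mat n Qf Γf T Φ)⁻¹ *ᵥ v) hab
    simpa [Matrix.mulVec_mulVec,
      Matrix.nonsing_inv_mul _ (isUnit_iff_ne_zero.2 hdet), Matrix.one_mulVec] using h
  obtain ⟨w₂, hw₂⟩ : ∃ w₂ : Fin n → ℝ, Z1mat n Qf Γf T Φ *ᵥ w₂ =
      -((((Φ T 0).toBlocks₂₁ + Qf * Γf * (Φ T 0).toBlocks₁₁) *ᵥ (fun i => x0 i + CfAux n Q η Φ T (Sum.inl i))) + Qf *ᵥ ηf) :=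
    ⟨(Z1mat n Qf Γf T Φ)⁻¹ *ᵥ
        -((((Φ T 0).toBlocks₂₁ + Qf * Γf * (Φ T 0).toBlocks₁₁) *ᵥ (fun i => x0 i + CfAux n Q η Φ T (Sum.inl i))) + Qf *ᵥ ηf), by
      rw [Matrix.mulVec_mulVec, Matrix.mul_nonsing_inv _ (isUnit_iff_ne_zero.2 hdet),
        Matrix.one_mulVec]⟩
  refine ⟨fun t i => (Φ t 0 *ᵥ (Sum.elim x0 (fun i => w₂ i - CfAux n Q η Φ T (Sum.inr i)) + CfAux n Q η Φ t)) (Sum.inl i),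
    fun t i => (Φ t 0 *ᵥ (Sum.elim x0 (fun i => w₂ i - CfAux n Q η Φ T (Sum.inr i)) + CfAux n Q η Φ t)) (Sum.inr i), ⟨?_, ?_, ?_, ?_⟩, ?_⟩
  · -- X-equation
    intro t ht j
    simpa [Function.comp_def] using hP1 (Sum.elim x0 (fun i => w₂ i - CfAux n Q η Φ T (Sum.inr i))) t ht (Sum.inl j)
  · -- s-equation
    intro t ht j
    simpa [Function.comp_def] using hP1 (Sum.elim x0 (fun i => w₂ i - CfAux n Q η Φ T (Sum.inr i))) t ht (Sum.inr j)
  · -- initial condition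
    funext i
    exact congrFun (hP2 (Sum.elim x0 (fun i => w₂ i - CfAux n Q η Φ T (Sum.inr i)))) (Sum.inl i)
  · -- terminal condition
    apply eq_neg_of_add_eq_zero_left
    show (fun i => (Φ T 0 *ᵥ (Sum.elim x0 (fun i => w₂ i - CfAux n Q η Φ T (Sum.inr i)) + CfAux n Q η Φ T)) (Sum.inr i))
        + Qf *ᵥ (Γf *ᵥ (fun i => (Φ T 0 *ᵥ (Sum.elim x0 (fun i => w₂ i - CfAux n Q η Φ T (Sum.inr i)) + CfAux n Q η Φ T)) (Sum.inl i)) + ηf) = 0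
    rw [hterm (Sum.elim x0 (fun i => w₂ i - CfAux n Q η Φ T (Sum.inr i)) + CfAux n Q η Φ T)]
    have hwr : (Sum.elim x0 (fun i => w₂ i - CfAux n Q η Φ T (Sum.inr i)) + CfAux n Q η Φ T) ∘ Sum.inr = w₂ := by
      funext i
      simp only [Function.comp_apply, Pi.add_apply, Sum.elim_inr]
      ring
    have hwl : (Sum.elim x0 (fun i => w₂ i - CfAux n Q η Φ T (Sum.inr i)) + CfAux n Q η Φ T) ∘ Sum.inl = (fun i => x0 i + CfAux n Q η Φ T (Sum.inl i)) := rfl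
    rw [hwr, hwl, hw₂]
    abel
  · -- uniqueness
    intro X' s' hX'sol
    obtain ⟨hX'd, hs'd, hX'0, hs'T⟩ := hX'sol
    have hy'd : ∀ t ∈ Set.Icc (0:ℝ) T,
        HasDerivWithinAt (fun u => Sum.elim (X' u) (s' u))
          (bbA n n1 A G Q Γ B R (Λ1 t) *ᵥ (Sum.elim (X' t) (s' t)) + Sum.elim (0 : Fin n → ℝ) (Q *ᵥ η)) (Set.Icc 0 T) t := by
      intro t ht
      refine hasDerivWithinAt_pi.2 fun p => ?_
      rw [TPBVAux3.block_eq n n1 A G Q Γ B R (Λ1 t) η]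
      cases p with
      | inl j =>
        simp only [Sum.elim_inl]
        exact hX'd t ht j
      | inr j =>
        simp only [Sum.elim_inr]
        exact hs'd t ht j
    have huni := TPBVAux.linear_ODE_unique hT _ hAMentry (Sum.elim (0 : Fin n → ℝ) (Q *ᵥ η))
      (fun u => Sum.elim (X' u) (s' u))
      (fun u => (Φ u 0 *ᵥ (Sum.elim (X' 0) (s' 0) + CfAux n Q η Φ u)))
      hy'd (hsol (Sum.elim (X' 0) (s' 0))) (t₀ := 0) ⟨le_rfl, hT.le⟩
      (hP2 (Sum.elim (X' 0) (s' 0))).symm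
    have hyT : Sum.elim (X' T) (s' T)
        = (Φ T 0 *ᵥ (Sum.elim (X' 0) (s' 0) + CfAux n Q η Φ T)) := huni T ⟨hT.le, le_rfl⟩
    have hadd : (fun i => (Φ T 0 *ᵥ (Sum.elim (X' 0) (s' 0) + CfAux n Q η Φ T)) (Sum.inr i))
        + Qf *ᵥ (Γf *ᵥ (fun i => (Φ T 0 *ᵥ (Sum.elim (X' 0) (s' 0) + CfAux n Q η Φ T)) (Sum.inl i)) + ηf)
          = 0 := by
      have h1 : (fun i => (Φ T 0 *ᵥ (Sum.elim (X' 0) (s' 0) + CfAux n Q η Φ T)) (Sum.inr i)) = s' T := by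
        funext i; rw [← hyT]; rfl
      have h2 : (fun i => (Φ T 0 *ᵥ (Sum.elim (X' 0) (s' 0) + CfAux n Q η Φ T)) (Sum.inl i)) = X' T := by
        funext i; rw [← hyT]; rfl
      rw [h1, h2, hs'T]
      simp
    rw [hterm (Sum.elim (X' 0) (s' 0) + CfAux n Q η Φ T)] at hadd
    have hw'l : (Sum.elim (X' 0) (s' 0) + CfAux n Q η Φ T) ∘ Sum.inl = (fun i => x0 i + CfAux n Q η Φ T (Sum.inl i)) := by
      funext i
      simp only [Function.comp_apply, Pi.add_apply, Sum.elim_inl, hX'0]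
    rw [hw'l] at hadd
    have hZw : Z1mat n Qf Γf T Φ *ᵥ ((Sum.elim (X' 0) (s' 0) + CfAux n Q η Φ T) ∘ Sum.inr)
        = -((((Φ T 0).toBlocks₂₁ + Qf * Γf * (Φ T 0).toBlocks₁₁) *ᵥ (fun i => x0 i + CfAux n Q η Φ T (Sum.inl i))) + Qf *ᵥ ηf) := by
      apply eq_neg_of_add_eq_zero_left
      rw [← hadd]; abel
    have hww : (Sum.elim (X' 0) (s' 0) + CfAux n Q η Φ T) ∘ Sum.inr = w₂ :=
      hZ1inj _ _ (by rw [hZw, hw₂])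
    have hs'0 : s' 0 = fun i => w₂ i - CfAux n Q η Φ T (Sum.inr i) := by
      funext i
      have h := congrFun hww i
      simp only [Function.comp_apply, Pi.add_apply, Sum.elim_inr] at h
      linarith
    have hz0' : Sum.elim (X' 0) (s' 0) = Sum.elim x0 (fun i => w₂ i - CfAux n Q η Φ T (Sum.inr i)) := by
      rw [hX'0, hs'0]
    intro t ht
    have hy't := huni t ht
    rw [hz0'] at hy't
    constructor
    · funext j
      exact congrFun hy't (Sum.inl j)
    · funext j
      exact congrFun hy't (Sum.inr j)
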